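/- arXiv:2301.09864 — 2 statements merged into one kernel-verified Lean document; each statement's English description precedes it below -/
import Mathlib

section
/- Let κ > 0, let S : [0, κ] → ℝ be continuous, and let τ ∈ [0, κ]. Then ∫_0^1 μ⁻¹ ( ∫_0^τ S(t) e^{−(τ−t)/μ} dt + ∫_τ^κ S(t) e^{−(t−τ)/μ} dt ) dμ = ∫_0^κ S(t) E₁(|τ − t|) dt, all integrals being well defined. (This is the angular integration step converting the formally solved radiative transfer equation with isotropic source S into a Fredholm integral with kernel E₁.) -/
open MeasureTheory Set intervalIntegral

/-- The exponential integral of order 1: `E₁(x) = ∫_0^1 μ⁻¹ e^{-x/μ} dμ`. -/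
noncomputable def expIntegral₁ (x : ℝ) : ℝ := ∫ μ in (0:ℝ)..1, μ⁻¹ * Real.exp (-x / μ)

open MeasureTheory Set intervalIntegral

lemma exp_int_up (μ c a b : ℝ) (hμ : μ ≠ 0) :
    ∫ t in a..b, Real.exp ((t - c)/μ) = μ * (Real.exp ((b-c)/μ) - Real.exp ((a-c)/μ)) := by
  have h : ∀ x ∈ Set.uIcc a b, HasDerivAt (fun t => μ * Real.exp ((t - c)/μ))
      (Real.exp ((x - c)/μ)) x := by
    intro x _
    have h1 : HasDerivAt (fun t : ℝ => (t - c)/μ) (1/μ) x := by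
      simpa using ((hasDerivAt_id x).sub_const c).div_const μ
    have := (h1.exp).const_mul μ
    convert this using 1
    case e'_4 => rfl
    case e'_5 => rfl
    rw [mul_left_comm, mul_one_div_cancel hμ, mul_one]
  rw [integral_eq_sub_of_hasDerivAt h
    ((Real.continuous_exp.comp (by continuity)).intervalIntegrable _ _)]
  ring

lemma exp_int_down (μ c a b : ℝ) (hμ : μ ≠ 0) :
    ∫ t in a..b, Real.exp ((c - t)/μ) = μ * (Real.exp ((c-a)/μ) - Real.exp ((c-b)/μ)) := by
  have h : ∀ x ∈ Set.uIcc a b, HasDerivAt (fun t => -(μ * Real.exp ((c - t)/μ)))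
      (Real.exp ((c - x)/μ)) x := by
    intro x _
    have h1 : HasDerivAt (fun t : ℝ => (c - t)/μ) (-(1/μ)) x := by
      simpa [neg_div] using ((hasDerivAt_id x).const_sub c).div_const μ
    have := ((h1.exp).const_mul μ).neg
    convert this using 1
    case e'_4 => rfl
    case e'_5 => rfl
    case e'_8 => rfl
    rw [mul_neg, mul_neg, neg_neg, mul_left_comm, mul_one_div_cancel hμ, mul_one]
  rw [integral_eq_sub_of_hasDerivAt h
    ((Real.continuous_exp.comp (by continuity)).intervalIntegrable _ _)]
  ring

/-- Splitting the kernel integral at `τ`. -/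
lemma split_kernel (g : ℝ → ℝ) (hg : Continuous g) (μ τ κ : ℝ)
    (hτ0 : 0 ≤ τ) (hτκ : τ ≤ κ) :
    ∫ t in Ioc (0:ℝ) κ, g t * Real.exp (-|τ - t| / μ) =
      (∫ t in (0:ℝ)..τ, g t * Real.exp (-(τ - t) / μ)) +
        ∫ t in τ..κ, g t * Real.exp (-(t - τ) / μ) := by
  have hcont : Continuous fun t : ℝ => g t * Real.exp (-|τ - t| / μ) := by
    exact hg.mul ((((continuous_const.sub continuous_id).abs.neg).div_const μ).rexp)
  rw [← intervalIntegral.integral_of_le (hτ0.trans hτκ),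
    ← intervalIntegral.integral_add_adjacent_intervals (b := τ)
      (hcont.intervalIntegrable _ _) (hcont.intervalIntegrable _ _)]
  congr 1
  · refine intervalIntegral.integral_congr fun t ht => ?_
    rw [Set.uIcc_of_le hτ0] at ht
    rw [abs_of_nonneg (sub_nonneg.2 ht.2)]
  · refine intervalIntegral.integral_congr fun t ht => ?_
    rw [Set.uIcc_of_le hτκ] at ht
    have h2 : -(-(τ - t)) = -(t - τ) := by ring
    rw [abs_of_nonpos (sub_nonpos.2 ht.1), h2]

lemma exp_abs_bound (μ τ κ : ℝ) (hμ : 0 < μ) (hτ0 : 0 ≤ τ) (hτκ : τ ≤ κ) :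
    ∫ t in Ioc (0:ℝ) κ, Real.exp (-|τ - t| / μ) ≤ 2 * μ := by
  have hs := split_kernel (fun _ => 1) continuous_const μ τ κ hτ0 hτκ
  simp only [one_mul] at hs
  rw [hs]
  have h1 : (∫ t in (0:ℝ)..τ, Real.exp (-(τ - t) / μ)) ≤ μ := by
    have he : (∫ t in (0:ℝ)..τ, Real.exp (-(τ - t) / μ)) =
        ∫ t in (0:ℝ)..τ, Real.exp ((t - τ) / μ) := by
      refine intervalIntegral.integral_congr fun t _ => ?_
      ring_nf
    have e1 : Real.exp ((τ - τ)/μ) = 1 := by norm_num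
    rw [he, exp_int_up μ τ 0 τ hμ.ne', e1]
    nlinarith [Real.exp_pos ((0 - τ)/μ)]
  have h2 : (∫ t in τ..κ, Real.exp (-(t - τ) / μ)) ≤ μ := by
    have he : (∫ t in τ..κ, Real.exp (-(t - τ) / μ)) =
        ∫ t in τ..κ, Real.exp ((τ - t) / μ) := by
      refine intervalIntegral.integral_congr fun t _ => ?_
      ring_nf
    have e1 : Real.exp ((τ - τ)/μ) = 1 := by norm_num
    rw [he, exp_int_down μ τ τ κ hμ.ne', e1]
    nlinarith [Real.exp_pos ((τ - κ)/μ)]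
  linarith

theorem key
    (κ : ℝ) (hκ : 0 < κ) (S : ℝ → ℝ) (hS : Continuous S)
    (τ : ℝ) (hτ : τ ∈ Set.Icc (0:ℝ) κ) :
    IntervalIntegrable
      (fun μ : ℝ => μ⁻¹ *
        ((∫ t in (0:ℝ)..τ, S t * Real.exp (-(τ - t) / μ)) +
          ∫ t in τ..κ, S t * Real.exp (-(t - τ) / μ)))
      MeasureTheory.volume 0 1 ∧
    IntervalIntegrable (fun t : ℝ => S t * expIntegral₁ |τ - t|)
      MeasureTheory.volume 0 κ ∧
    (∫ μ in (0:ℝ)..1, μ⁻¹ *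
        ((∫ t in (0:ℝ)..τ, S t * Real.exp (-(τ - t) / μ)) +
          ∫ t in τ..κ, S t * Real.exp (-(t - τ) / μ))) =
      ∫ t in (0:ℝ)..κ, S t * expIntegral₁ |τ - t| := by
  obtain ⟨hτ0, hτκ⟩ := hτ
  set ν := volume.restrict (Ioc (0:ℝ) 1) with hν
  set ρ := volume.restrict (Ioc (0:ℝ) κ) with hρ
  set f : ℝ → ℝ → ℝ := fun μ t => μ⁻¹ * (S t * Real.exp (-|τ - t| / μ)) with hf
  -- bound on S
  obtain ⟨C, hC⟩ : ∃ C, ∀ x ∈ Icc (0:ℝ) κ, |S x| ≤ C :=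
    (isCompact_Icc.exists_bound_of_continuousOn hS.continuousOn).imp
      (fun C hC x hx => by simpa using hC x hx)
  have hC0 : 0 ≤ C := le_trans (abs_nonneg _) (hC 0 ⟨le_rfl, hκ.le⟩)
  -- measurability
  have hmeas : AEStronglyMeasurable (Function.uncurry f) (ν.prod ρ) := by
    apply Measurable.aestronglyMeasurable
    exact (measurable_fst.inv).mul ((hS.measurable.comp measurable_snd).mul
      ((((measurable_const.sub measurable_snd).abs.neg).div measurable_fst).exp))
  -- sections are integrable
  have hseccont : ∀ μ : ℝ, Continuous (f μ) := fun μ =>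
    continuous_const.mul (hS.mul
      ((((continuous_const.sub continuous_id).abs.neg).div_const μ).rexp))
  have hsec : ∀ μ : ℝ, Integrable (f μ) ρ := fun μ =>
    (hseccont μ).integrableOn_Ioc
  -- norm bound
  have hbound : ∀ μ ∈ Ioc (0:ℝ) 1, (∫ t, ‖f μ t‖ ∂ρ) ≤ 2 * C := by
    intro μ hμ
    have hμ0 : 0 < μ := hμ.1
    have hnorm : (fun t => ‖f μ t‖) =
        fun t => μ⁻¹ * (|S t| * Real.exp (-|τ - t| / μ)) := by
      funext t
      rw [Real.norm_eq_abs, abs_mul, abs_of_pos (inv_pos.2 hμ0), abs_mul,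
        abs_of_pos (Real.exp_pos _)]
    rw [hnorm, MeasureTheory.integral_const_mul]
    have hle : (∫ t, |S t| * Real.exp (-|τ - t| / μ) ∂ρ) ≤ C * (2 * μ) := by
      have step1 : (∫ t, |S t| * Real.exp (-|τ - t| / μ) ∂ρ) ≤
          ∫ t, C * Real.exp (-|τ - t| / μ) ∂ρ := by
        refine setIntegral_mono_on
          ((hS.abs.mul ((((continuous_const.sub continuous_id).abs.neg).div_const μ).rexp)).integrableOn_Ioc)
          ((continuous_const.mul ((((continuous_const.sub continuous_id).abs.neg).div_const μ).rexp)).integrableOn_Ioc)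
          measurableSet_Ioc (fun t ht => ?_)
        exact mul_le_mul_of_nonneg_right (hC t ⟨ht.1.le, ht.2⟩) (Real.exp_pos _).le
      calc (∫ t, |S t| * Real.exp (-|τ - t| / μ) ∂ρ)
          ≤ ∫ t, C * Real.exp (-|τ - t| / μ) ∂ρ := step1
        _ = C * ∫ t, Real.exp (-|τ - t| / μ) ∂ρ := MeasureTheory.integral_const_mul _ _
        _ ≤ C * (2 * μ) := mul_le_mul_of_nonneg_left
            (exp_abs_bound μ τ κ hμ0 hτ0 hτκ) hC0
    calc μ⁻¹ * ∫ t, |S t| * Real.exp (-|τ - t| / μ) ∂ρ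
        ≤ μ⁻¹ * (C * (2 * μ)) := mul_le_mul_of_nonneg_left hle (inv_nonneg.2 hμ0.le)
      _ = 2 * C := by field_simp
  -- integrability on the product
  have hInt : Integrable (Function.uncurry f) (ν.prod ρ) := by
    refine (integrable_prod_iff hmeas).2 ⟨Filter.Eventually.of_forall fun μ => hsec μ, ?_⟩
    refine Integrable.mono' (integrable_const (2 * C))
      hmeas.norm.integral_prod_right' ?_
    rw [hν, ae_restrict_iff' measurableSet_Ioc]
    refine Filter.Eventually.of_forall fun μ hμ => ?_
    rw [Real.norm_eq_abs, abs_of_nonneg (integral_nonneg fun t => norm_nonneg _)]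
    exact hbound μ hμ
  -- inner integral identity for μ > 0
  have hinner : ∀ μ ∈ Ioc (0:ℝ) 1, (∫ t, f μ t ∂ρ) =
      μ⁻¹ * ((∫ t in (0:ℝ)..τ, S t * Real.exp (-(τ - t) / μ)) +
        ∫ t in τ..κ, S t * Real.exp (-(t - τ) / μ)) := by
    intro μ hμ
    rw [hρ]
    show (∫ t in Ioc (0:ℝ) κ, μ⁻¹ * (S t * Real.exp (-|τ - t| / μ))) = _
    rw [MeasureTheory.integral_const_mul, split_kernel S hS μ τ κ hτ0 hτκ]
  -- outer integral identity for every t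
  have houter : ∀ t : ℝ, (∫ μ, f μ t ∂ν) = S t * expIntegral₁ |τ - t| := by
    intro t
    have h1 : (∫ μ, f μ t ∂ν) = ∫ μ, S t * (μ⁻¹ * Real.exp (-|τ - t| / μ)) ∂ν := by
      refine integral_congr_ae (Filter.Eventually.of_forall fun μ => ?_)
      show μ⁻¹ * (S t * Real.exp (-|τ - t| / μ)) = _
      ring
    rw [h1, MeasureTheory.integral_const_mul, expIntegral₁,
      intervalIntegral.integral_of_le (zero_le_one' ℝ)]
  refine ⟨?_, ?_, ?_⟩
  · rw [intervalIntegrable_iff_integrableOn_Ioc_of_le (zero_le_one' ℝ)]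
    refine (hInt.integral_prod_left).congr ?_
    exact (MeasureTheory.ae_restrict_iff' measurableSet_Ioc).2
      (Filter.Eventually.of_forall fun μ hμ => hinner μ hμ)
  · rw [intervalIntegrable_iff_integrableOn_Ioc_of_le hκ.le]
    have := hInt.integral_prod_right
    refine this.congr (Filter.Eventually.of_forall fun t => houter t)
  · rw [intervalIntegral.integral_of_le (zero_le_one' ℝ),
      intervalIntegral.integral_of_le hκ.le]
    have swap := MeasureTheory.integral_integral_swap (f := f) hInt
    calc (∫ μ in Ioc (0:ℝ) 1, μ⁻¹ *
          ((∫ t in (0:ℝ)..τ, S t * Real.exp (-(τ - t) / μ)) +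
            ∫ t in τ..κ, S t * Real.exp (-(t - τ) / μ)))
        = ∫ μ, (∫ t, f μ t ∂ρ) ∂ν := by
          refine integral_congr_ae ((MeasureTheory.ae_restrict_iff' measurableSet_Ioc).2
            (Filter.Eventually.of_forall fun μ hμ => (hinner μ hμ).symm))
      _ = ∫ t, (∫ μ, f μ t ∂ν) ∂ρ := swap
      _ = ∫ t in Ioc (0:ℝ) κ, S t * expIntegral₁ |τ - t| :=
          integral_congr_ae (Filter.Eventually.of_forall fun t => houter t)

/-- The angular integration step converting the formally solved radiative transfer
equation with isotropic source `S` into a Fredholm integral with kernel `E₁`: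
for `κ > 0`, `S` continuous on `[0, κ]` and `τ ∈ [0, κ]`,
`∫_0^1 μ⁻¹ (∫_0^τ S(t) e^{-(τ-t)/μ} dt + ∫_τ^κ S(t) e^{-(t-τ)/μ} dt) dμ
  = ∫_0^κ S(t) E₁(|τ-t|) dt`, all integrals being well defined. -/
theorem angular_integration_fredholm
    (κ : ℝ) (hκ : 0 < κ) (S : ℝ → ℝ) (hS : ContinuousOn S (Set.Icc 0 κ))
    (τ : ℝ) (hτ : τ ∈ Set.Icc (0:ℝ) κ) :
    IntervalIntegrable
      (fun μ : ℝ => μ⁻¹ *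
        ((∫ t in (0:ℝ)..τ, S t * Real.exp (-(τ - t) / μ)) +
          ∫ t in τ..κ, S t * Real.exp (-(t - τ) / μ)))
      MeasureTheory.volume 0 1 ∧
    IntervalIntegrable (fun t : ℝ => S t * expIntegral₁ |τ - t|)
      MeasureTheory.volume 0 κ ∧
    (∫ μ in (0:ℝ)..1, μ⁻¹ *
        ((∫ t in (0:ℝ)..τ, S t * Real.exp (-(τ - t) / μ)) +
          ∫ t in τ..κ, S t * Real.exp (-(t - τ) / μ))) =
      ∫ t in (0:ℝ)..κ, S t * expIntegral₁ |τ - t| := by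
  obtain ⟨g, hg⟩ := ContinuousMap.exists_restrict_eq (isClosed_Icc (a := (0:ℝ)) (b := κ))
    ⟨_, hS.restrict⟩
  have hgS : ∀ x ∈ Icc (0:ℝ) κ, g x = S x := fun x hx =>
    congrFun (congrArg DFunLike.coe hg) ⟨x, hx⟩
  obtain ⟨k1, k2, k3⟩ := key κ hκ g g.continuous τ hτ
  have h1 : (fun μ : ℝ => μ⁻¹ *
        ((∫ t in (0:ℝ)..τ, S t * Real.exp (-(τ - t) / μ)) +
          ∫ t in τ..κ, S t * Real.exp (-(t - τ) / μ))) =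
      (fun μ : ℝ => μ⁻¹ *
        ((∫ t in (0:ℝ)..τ, g t * Real.exp (-(τ - t) / μ)) +
          ∫ t in τ..κ, g t * Real.exp (-(t - τ) / μ))) := by
    funext μ
    have e1 : (∫ t in (0:ℝ)..τ, S t * Real.exp (-(τ - t) / μ)) =
        ∫ t in (0:ℝ)..τ, g t * Real.exp (-(τ - t) / μ) := by
      refine intervalIntegral.integral_congr fun t ht => ?_
      rw [uIcc_of_le hτ.1] at ht
      rw [hgS t ⟨ht.1, ht.2.trans hτ.2⟩]
    have e2 : (∫ t in τ..κ, S t * Real.exp (-(t - τ) / μ)) =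
        ∫ t in τ..κ, g t * Real.exp (-(t - τ) / μ) := by
      refine intervalIntegral.integral_congr fun t ht => ?_
      rw [uIcc_of_le hτ.2] at ht
      rw [hgS t ⟨hτ.1.trans ht.1, ht.2⟩]
    rw [e1, e2]
  have h2 : EqOn (fun t : ℝ => S t * expIntegral₁ |τ - t|)
      (fun t : ℝ => g t * expIntegral₁ |τ - t|) (uIcc (0:ℝ) κ) := by
    intro t ht
    rw [uIcc_of_le hκ.le] at ht
    simp only [hgS t ht]
  refine ⟨h1 ▸ k1, ?_, ?_⟩
  · refine k2.congr ?_
    intro t ht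
    have : t ∈ Icc (0:ℝ) κ := by
      rw [uIoc_of_le hκ.le] at ht
      exact ⟨ht.1.le, ht.2⟩
    simp only [hgS t this]
  · rw [h1, k3]
    exact (intervalIntegral.integral_congr h2).symm
end

section
/- Let κ > 0, ω ∈ [0, 1], and let f : [0, κ] → ℝ be continuous. Then there exists a unique continuous function Λ : [0, κ] → ℝ satisfying the Fredholm integral equation Λ(τ) = (ω/2) ∫_0^κ E₁(|τ − t|) Λ(t) dt + f(τ) for all τ ∈ [0, κ]. (The basic-state nondimensional total intensity of the illuminated algal suspension is the case f(τ) = e^{−τ/cos θ₀} + 2 I_D E₂(τ); uniqueness follows because the integral operator is a sup-norm contraction with constant ω(1 − E₂(κ)) < 1.) -/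
open MeasureTheory Real Set intervalIntegral

namespace FredholmAux

lemma kmeas : Measurable fun p : ℝ × ℝ => p.2⁻¹ * Real.exp (-p.1 / p.2) :=
  measurable_snd.inv.mul (Real.measurable_exp.comp (measurable_fst.neg.div measurable_snd))

lemma e1_eq (x : ℝ) : expIntegral₁ x = ∫ μ in Ioc (0:ℝ) 1, μ⁻¹ * Real.exp (-x / μ) := by
  rw [expIntegral₁, intervalIntegral.integral_of_le zero_le_one]

lemma e1_meas : Measurable expIntegral₁ := by
  have : Measurable fun x : ℝ => ∫ μ in Ioc (0:ℝ) 1, μ⁻¹ * Real.exp (-x / μ) := by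
    exact (kmeas.stronglyMeasurable.integral_prod_right'
      (ν := volume.restrict (Ioc (0:ℝ) 1))).measurable
  simpa [funext e1_eq] using this

lemma e1_nonneg (x : ℝ) : 0 ≤ expIntegral₁ x := by
  rw [e1_eq]
  refine setIntegral_nonneg measurableSet_Ioc fun μ hμ => ?_
  exact mul_nonneg (inv_nonneg.2 hμ.1.le) (Real.exp_pos _).le




lemma expInt {μ : ℝ} (hμ : 0 < μ) (c a b : ℝ) :
    ∫ t in a..b, Real.exp ((t - c) / μ) =
      μ * Real.exp ((b - c) / μ) - μ * Real.exp ((a - c) / μ) := by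
  have h : ∀ t ∈ Set.uIcc a b, HasDerivAt (fun s => μ * Real.exp ((s - c) / μ))
      (Real.exp ((t - c) / μ)) t := by
    intro t _
    have h1 : HasDerivAt (fun s : ℝ => (s - c) / μ) (1 / μ) t := by
      simpa using ((hasDerivAt_id t).sub_const c).div_const μ
    have h2 := (Real.hasDerivAt_exp ((t - c) / μ)).comp t h1
    have h3 := h2.const_mul μ
    have he : μ * (Real.exp ((t - c) / μ) * (1 / μ)) = Real.exp ((t - c) / μ) := by
      field_simp
    rw [he] at h3
    exact h3
  rw [intervalIntegral.integral_eq_sub_of_hasDerivAt h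
    ((Real.continuous_exp.comp ((continuous_id.sub continuous_const).div_const μ)).intervalIntegrable a b)]

lemma expInt' {μ : ℝ} (hμ : 0 < μ) (c a b : ℝ) :
    ∫ t in a..b, Real.exp ((c - t) / μ) =
      μ * Real.exp ((c - a) / μ) - μ * Real.exp ((c - b) / μ) := by
  have h : ∀ t ∈ Set.uIcc a b, HasDerivAt (fun s => -(μ * Real.exp ((c - s) / μ)))
      (Real.exp ((c - t) / μ)) t := by
    intro t _
    have h1 : HasDerivAt (fun s : ℝ => (c - s) / μ) (-(1 / μ)) t := by
      have := ((hasDerivAt_id t).const_sub c).div_const μ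
      simpa [neg_div] using this
    have h2 := (Real.hasDerivAt_exp ((c - t) / μ)).comp t h1
    have h3 := (h2.const_mul μ).neg
    have : μ * (Real.exp ((c - t) / μ) * -(1 / μ)) = -Real.exp ((c - t) / μ) := by
      field_simp
    rw [this] at h3
    simp only [neg_neg] at h3
    exact h3
  rw [intervalIntegral.integral_eq_sub_of_hasDerivAt h
    ((Real.continuous_exp.comp ((continuous_const.sub continuous_id).div_const μ)).intervalIntegrable a b)]
  ring

lemma kcont (τ μ : ℝ) : Continuous fun t : ℝ => Real.exp (-|τ - t| / μ) :=
  Real.continuous_exp.comp (((continuous_const.sub continuous_id).abs.neg).div_const μ)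

lemma Jexact {μ : ℝ} (hμ : 0 < μ) {a b τ : ℝ} (h1 : a ≤ τ) (h2 : τ ≤ b) :
    ∫ t in a..b, Real.exp (-|τ - t| / μ) =
      2 * μ - μ * Real.exp ((a - τ) / μ) - μ * Real.exp ((τ - b) / μ) := by
  have hint : ∀ u v : ℝ, IntervalIntegrable (fun t => Real.exp (-|τ - t| / μ)) volume u v :=
    fun u v => (kcont τ μ).intervalIntegrable u v
  rw [← intervalIntegral.integral_add_adjacent_intervals (b := τ) (hint a τ) (hint τ b)]
  have e1 : ∫ t in a..τ, Real.exp (-|τ - t| / μ) = ∫ t in a..τ, Real.exp ((t - τ) / μ) := by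
    refine intervalIntegral.integral_congr fun t ht => ?_
    rw [Set.uIcc_of_le h1] at ht
    rw [abs_of_nonneg (by linarith [ht.2])]
    ring_nf
  have e2 : ∫ t in τ..b, Real.exp (-|τ - t| / μ) = ∫ t in τ..b, Real.exp ((τ - t) / μ) := by
    refine intervalIntegral.integral_congr fun t ht => ?_
    rw [Set.uIcc_of_le h2] at ht
    rw [abs_of_nonpos (by linarith [ht.1])]
    ring_nf
  rw [e1, e2, expInt hμ, expInt' hμ]
  simp
  ring





lemma Jle {μ : ℝ} (hμ : 0 < μ) (τ : ℝ) {a b : ℝ} (hab : a ≤ b) :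
    ∫ t in Ioc a b, Real.exp (-|τ - t| / μ) ≤ 2 * μ := by
  set a' := min a τ
  set b' := max b τ
  have h1 : ∫ t in Ioc a b, Real.exp (-|τ - t| / μ) ≤
      ∫ t in Ioc a' b', Real.exp (-|τ - t| / μ) := by
    refine setIntegral_mono_set ((kcont τ μ).integrableOn_Ioc) ?_ ?_
    · exact Filter.Eventually.of_forall fun t => (Real.exp_pos _).le
    · exact HasSubset.Subset.eventuallyLE (Ioc_subset_Ioc (min_le_left a τ) (le_max_left b τ))
  have h2 : ∫ t in Ioc a' b', Real.exp (-|τ - t| / μ) =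
      ∫ t in a'..b', Real.exp (-|τ - t| / μ) := by
    rw [intervalIntegral.integral_of_le (le_trans (min_le_right a τ) (le_max_right b τ))]
  have h3 := Jexact hμ (min_le_right a τ) (le_max_right b τ) (b := b')
  have e1 : 0 ≤ μ * Real.exp ((a' - τ) / μ) := by positivity
  have e2 : 0 ≤ μ * Real.exp ((τ - b') / μ) := by positivity
  rw [h2] at h1; rw [h3] at h1; linarith

lemma Jkb {κ μ : ℝ} (hμ : 0 < μ) {τ : ℝ} (hτ : τ ∈ Icc 0 κ) :
    ∫ t in Ioc 0 κ, Real.exp (-|τ - t| / μ) ≤ 2 * μ * (1 - Real.exp (-κ / μ)) := by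
  rw [← intervalIntegral.integral_of_le (le_trans hτ.1 hτ.2), Jexact hμ hτ.1 hτ.2]
  have e1 : μ * Real.exp (-κ / μ) ≤ μ * Real.exp ((0 - τ) / μ) := by
    refine mul_le_mul_of_nonneg_left (Real.exp_le_exp.2 ?_) hμ.le
    exact (div_le_div_iff_of_pos_right hμ).2 (by linarith [hτ.2])
  have e2 : μ * Real.exp (-κ / μ) ≤ μ * Real.exp ((τ - κ) / μ) := by
    refine mul_le_mul_of_nonneg_left (Real.exp_le_exp.2 ?_) hμ.le
    exact (div_le_div_iff_of_pos_right hμ).2 (by linarith [hτ.1])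
  linarith


variable {κ τ M : ℝ} {G : ℝ → ℝ}

lemma fmeas (hG : Measurable G) (τ : ℝ) :
    Measurable fun p : ℝ × ℝ => p.2⁻¹ * Real.exp (-|τ - p.1| / p.2) * G p.1 :=
  ((measurable_snd.inv.mul (Real.measurable_exp.comp
    (((measurable_const.sub measurable_fst).abs.neg).div measurable_snd)))).mul
    (hG.comp measurable_fst)

lemma Mnonneg (hM : ∀ t, |G t| ≤ M) : 0 ≤ M := le_trans (abs_nonneg _) (hM 0)

lemma prodInt (hκ : 0 < κ) (hG : Measurable G) (hM : ∀ t, |G t| ≤ M) (τ : ℝ) :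
    Integrable (fun p : ℝ × ℝ => p.2⁻¹ * Real.exp (-|τ - p.1| / p.2) * G p.1)
      ((volume.restrict (Ioc 0 κ)).prod (volume.restrict (Ioc (0:ℝ) 1))) := by
  have hsm := (fmeas hG τ).aestronglyMeasurable
    (μ := (volume.restrict (Ioc 0 κ)).prod (volume.restrict (Ioc (0:ℝ) 1)))
  rw [integrable_prod_iff' hsm]
  constructor
  · filter_upwards [ae_restrict_mem measurableSet_Ioc] with μ hμ
    refine Integrable.mono' (g := fun _ => μ⁻¹ * M)
      (integrable_const _) ((fmeas hG τ).comp (measurable_id.prodMk measurable_const)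
        |>.aestronglyMeasurable) ?_
    refine Filter.Eventually.of_forall fun t => ?_
    have h1 : Real.exp (-|τ - t| / μ) ≤ 1 := Real.exp_le_one_iff.2 (by
      apply div_nonpos_of_nonpos_of_nonneg (neg_nonpos.2 (abs_nonneg _)) hμ.1.le)
    have h2 : (0:ℝ) ≤ μ⁻¹ := inv_nonneg.2 hμ.1.le
    calc ‖μ⁻¹ * Real.exp (-|τ - t| / μ) * G t‖
        = μ⁻¹ * Real.exp (-|τ - t| / μ) * |G t| := by
          rw [Real.norm_eq_abs, abs_mul, abs_of_nonneg (by positivity)]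
      _ ≤ μ⁻¹ * 1 * M := by
          apply mul_le_mul (by apply mul_le_mul_of_nonneg_left h1 h2) (hM t)
            (abs_nonneg _) (by positivity)
      _ = μ⁻¹ * M := by ring
  · have hsm2 : AEStronglyMeasurable
        (fun μ : ℝ => ∫ t in Ioc (0:ℝ) κ, ‖μ⁻¹ * Real.exp (-|τ - t| / μ) * G t‖)
        (volume.restrict (Ioc (0:ℝ) 1)) := by
      exact ((fmeas hG τ).norm.stronglyMeasurable.integral_prod_left').aestronglyMeasurable
    refine Integrable.mono' (g := fun _ => 2 * M) (integrable_const _) hsm2 ?_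
    filter_upwards [ae_restrict_mem measurableSet_Ioc] with μ hμ
    have hμ0 : 0 < μ := hμ.1
    have hMn := Mnonneg hM
    rw [Real.norm_eq_abs, abs_of_nonneg (integral_nonneg fun t => norm_nonneg _)]
    have step : ∫ t in Ioc (0:ℝ) κ, ‖μ⁻¹ * Real.exp (-|τ - t| / μ) * G t‖
        ≤ ∫ t in Ioc (0:ℝ) κ, (μ⁻¹ * M) * Real.exp (-|τ - t| / μ) := by
      refine integral_mono_of_nonneg (Filter.Eventually.of_forall fun t => norm_nonneg _)
        ((continuous_const.mul (kcont τ μ)).integrableOn_Ioc) ?_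
      refine Filter.Eventually.of_forall fun t => ?_
      show ‖μ⁻¹ * Real.exp (-|τ - t| / μ) * G t‖ ≤ (μ⁻¹ * M) * Real.exp (-|τ - t| / μ)
      rw [Real.norm_eq_abs, abs_mul, abs_mul, abs_of_nonneg (inv_nonneg.2 hμ0.le),
        abs_of_nonneg (Real.exp_pos _).le]
      calc μ⁻¹ * Real.exp (-|τ - t| / μ) * |G t|
          ≤ μ⁻¹ * Real.exp (-|τ - t| / μ) * M := by
            apply mul_le_mul_of_nonneg_left (hM t) (by positivity)
        _ = (μ⁻¹ * M) * Real.exp (-|τ - t| / μ) := by ring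
    refine step.trans ?_
    rw [MeasureTheory.integral_const_mul]
    calc (μ⁻¹ * M) * ∫ t in Ioc (0:ℝ) κ, Real.exp (-|τ - t| / μ)
        ≤ (μ⁻¹ * M) * (2 * μ) :=
          mul_le_mul_of_nonneg_left (Jle hμ0 τ hκ.le) (by positivity)
      _ = 2 * M := by field_simp

lemma int_e1G (hκ : 0 < κ) (hG : Measurable G) (hM : ∀ t, |G t| ≤ M) (τ : ℝ) :
    IntegrableOn (fun t => expIntegral₁ |τ - t| * G t) (Ioc 0 κ) := by
  have h := (prodInt hκ hG hM τ).integral_prod_left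
  refine h.congr (Filter.Eventually.of_forall fun t => ?_)
  show (∫ μ in Ioc (0:ℝ) 1, μ⁻¹ * Real.exp (-|τ - t| / μ) * G t) = expIntegral₁ |τ - t| * G t
  rw [e1_eq, ← MeasureTheory.integral_mul_const]

lemma fubini (hκ : 0 < κ) (hG : Measurable G) (hM : ∀ t, |G t| ≤ M) (τ : ℝ) :
    ∫ t in Ioc (0:ℝ) κ, expIntegral₁ |τ - t| * G t =
      ∫ μ in Ioc (0:ℝ) 1, μ⁻¹ * ∫ t in Ioc (0:ℝ) κ, Real.exp (-|τ - t| / μ) * G t := by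
  have swap := integral_integral_swap (f := fun t μ : ℝ =>
      μ⁻¹ * Real.exp (-|τ - t| / μ) * G t) (prodInt hκ hG hM τ)
  have lhs : ∀ t : ℝ, expIntegral₁ |τ - t| * G t
      = ∫ μ in Ioc (0:ℝ) 1, μ⁻¹ * Real.exp (-|τ - t| / μ) * G t := by
    intro t; rw [e1_eq, ← MeasureTheory.integral_mul_const]
  have rhs : ∀ μ : ℝ, (∫ t in Ioc (0:ℝ) κ, μ⁻¹ * Real.exp (-|τ - t| / μ) * G t)
      = μ⁻¹ * ∫ t in Ioc (0:ℝ) κ, Real.exp (-|τ - t| / μ) * G t := by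
    intro μ
    rw [← MeasureTheory.integral_const_mul]
    congr 1; ext t; ring
  simp only [lhs]
  rw [swap]
  simp only [rhs]



noncomputable def E₂ (κ : ℝ) : ℝ := ∫ μ in Ioc (0:ℝ) 1, Real.exp (-κ / μ)

lemma expKmeas (κ : ℝ) : Measurable fun μ : ℝ => Real.exp (-κ / μ) :=
  Real.measurable_exp.comp (measurable_const.div measurable_id)

lemma expKint (hκ : 0 < κ) : IntegrableOn (fun μ : ℝ => Real.exp (-κ / μ)) (Ioc 0 1) := by
  refine Integrable.mono' (g := fun _ => 1) (integrable_const _)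
    ((expKmeas κ).aestronglyMeasurable) ?_
  filter_upwards [ae_restrict_mem measurableSet_Ioc] with μ hμ
  rw [Real.norm_eq_abs, abs_of_nonneg (Real.exp_pos _).le]
  exact Real.exp_le_one_iff.2 (div_nonpos_of_nonpos_of_nonneg (by linarith [hκ]) hμ.1.le)

lemma E₂pos (hκ : 0 < κ) : 0 < E₂ κ := by
  rw [E₂, ← intervalIntegral.integral_of_le zero_le_one]
  refine intervalIntegral.intervalIntegral_pos_of_pos_on ?_ (fun x _ => Real.exp_pos _)
    zero_lt_one
  rw [intervalIntegrable_iff_integrableOn_Ioc_of_le zero_le_one]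
  exact expKint hκ

lemma E₂le1 (hκ : 0 < κ) : E₂ κ ≤ 1 := by
  have h : ∫ μ in Ioc (0:ℝ) 1, Real.exp (-κ / μ) ≤ ∫ _μ in Ioc (0:ℝ) 1, (1:ℝ) := by
    refine integral_mono_of_nonneg
      (Filter.Eventually.of_forall fun μ => (Real.exp_pos _).le) (integrable_const _) ?_
    filter_upwards [ae_restrict_mem measurableSet_Ioc] with μ hμ
    exact Real.exp_le_one_iff.2 (div_nonpos_of_nonpos_of_nonneg (by linarith [hκ]) hμ.1.le)
  simpa [Real.volume_Ioc, E₂] using h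

lemma kernel_bound (hκ : 0 < κ) {τ : ℝ} (hτ : τ ∈ Icc 0 κ) :
    ∫ t in Ioc (0:ℝ) κ, expIntegral₁ |τ - t| ≤ 2 - 2 * E₂ κ := by
  have h1 : (∫ t in Ioc (0:ℝ) κ, expIntegral₁ |τ - t|) =
      ∫ μ in Ioc (0:ℝ) 1, μ⁻¹ * ∫ t in Ioc (0:ℝ) κ, Real.exp (-|τ - t| / μ) * (1:ℝ) := by
    have := fubini (G := fun _ => (1:ℝ)) (M := 1) hκ measurable_const
      (fun t => by norm_num) τ
    simpa using this
  rw [h1]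
  have h2 : ∫ μ in Ioc (0:ℝ) 1, μ⁻¹ * (∫ t in Ioc (0:ℝ) κ, Real.exp (-|τ - t| / μ) * (1:ℝ))
      ≤ ∫ μ in Ioc (0:ℝ) 1, (2 - 2 * Real.exp (-κ / μ)) := by
    refine integral_mono_of_nonneg ?_ ?_ ?_
    · filter_upwards [ae_restrict_mem measurableSet_Ioc] with μ hμ
      exact mul_nonneg (inv_nonneg.2 hμ.1.le)
        (setIntegral_nonneg measurableSet_Ioc fun t _ => by positivity)
    · refine Integrable.mono' (g := fun _ => 2) (integrable_const _)
        ((measurable_const.sub ((expKmeas κ).const_mul 2)).aestronglyMeasurable) ?_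
      filter_upwards [ae_restrict_mem measurableSet_Ioc] with μ hμ
      have h3 : Real.exp (-κ / μ) ≤ 1 :=
        Real.exp_le_one_iff.2 (div_nonpos_of_nonpos_of_nonneg (by linarith [hκ]) hμ.1.le)
      have h4 := (Real.exp_pos (-κ / μ)).le
      rw [Real.norm_eq_abs, abs_of_nonneg (by linarith)]
      linarith
    · filter_upwards [ae_restrict_mem measurableSet_Ioc] with μ hμ
      have hμ0 : 0 < μ := hμ.1
      have hJ := Jkb (κ := κ) hμ0 hτ
      have := mul_le_mul_of_nonneg_left hJ (inv_nonneg.2 hμ0.le)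
      calc μ⁻¹ * ∫ t in Ioc (0:ℝ) κ, Real.exp (-|τ - t| / μ) * (1:ℝ)
          = μ⁻¹ * ∫ t in Ioc (0:ℝ) κ, Real.exp (-|τ - t| / μ) := by simp
        _ ≤ μ⁻¹ * (2 * μ * (1 - Real.exp (-κ / μ))) := this
        _ = 2 - 2 * Real.exp (-κ / μ) := by field_simp
  refine h2.trans ?_
  rw [integral_sub (integrable_const _) ((expKint hκ).const_mul 2), MeasureTheory.integral_const_mul]
  simp [Real.volume_Ioc, E₂]


lemma cont_inner (hG : Continuous G) (hM : ∀ t, |G t| ≤ M) {μ : ℝ} (hμ : 0 < μ) :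
    Continuous fun τ : ℝ => ∫ t in Ioc (0:ℝ) κ, Real.exp (-|τ - t| / μ) * G t := by
  refine continuous_of_dominated (bound := fun _ => M)
    (fun τ => ((kcont τ μ).mul hG).aestronglyMeasurable) (fun τ => ?_)
    (integrable_const _) ?_
  · refine Filter.Eventually.of_forall fun t => ?_
    have h1 : Real.exp (-|τ - t| / μ) ≤ 1 := Real.exp_le_one_iff.2
      (div_nonpos_of_nonpos_of_nonneg (neg_nonpos.2 (abs_nonneg _)) hμ.le)
    rw [Real.norm_eq_abs, abs_mul, abs_of_nonneg (Real.exp_pos _).le]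
    calc Real.exp (-|τ - t| / μ) * |G t| ≤ 1 * M :=
        mul_le_mul h1 (hM t) (abs_nonneg _) zero_le_one
      _ = M := one_mul M
  · refine Filter.Eventually.of_forall fun t => ?_
    exact (Real.continuous_exp.comp
      (((continuous_id.sub continuous_const).abs.neg).div_const μ)).mul continuous_const

lemma cont_integral (hκ : 0 < κ) (hG : Continuous G) (hM : ∀ t, |G t| ≤ M) :
    Continuous fun τ : ℝ => ∫ t in Ioc (0:ℝ) κ, expIntegral₁ |τ - t| * G t := by
  have hMn := Mnonneg hM
  have key : (fun τ : ℝ => ∫ t in Ioc (0:ℝ) κ, expIntegral₁ |τ - t| * G t) =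
      fun τ : ℝ => ∫ μ in Ioc (0:ℝ) 1,
        μ⁻¹ * ∫ t in Ioc (0:ℝ) κ, Real.exp (-|τ - t| / μ) * G t :=
    funext fun τ => fubini hκ hG.measurable hM τ
  rw [key]
  refine continuous_of_dominated (bound := fun _ => 2 * M) (fun τ => ?_) (fun τ => ?_)
    (integrable_const _) ?_
  · refine Measurable.aestronglyMeasurable (measurable_inv.mul ?_)
    exact (((Real.measurable_exp.comp
        ((((measurable_const.sub measurable_fst).abs.neg)).div measurable_snd)).mul
        (hG.measurable.comp measurable_fst)).stronglyMeasurable.integral_prod_left'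
        (μ := volume.restrict (Ioc (0:ℝ) κ))).measurable
  · filter_upwards [ae_restrict_mem measurableSet_Ioc] with μ hμ
    have hμ0 : 0 < μ := hμ.1
    have hb : ‖∫ t in Ioc (0:ℝ) κ, Real.exp (-|τ - t| / μ) * G t‖ ≤
        ∫ t in Ioc (0:ℝ) κ, Real.exp (-|τ - t| / μ) * M := by
      refine norm_integral_le_of_norm_le (((kcont τ μ).mul continuous_const).integrableOn_Ioc)
        (Filter.Eventually.of_forall fun t => ?_)
      rw [Real.norm_eq_abs, abs_mul, abs_of_nonneg (Real.exp_pos _).le]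
      exact mul_le_mul_of_nonneg_left (hM t) (Real.exp_pos _).le
    have hb2 : (∫ t in Ioc (0:ℝ) κ, Real.exp (-|τ - t| / μ) * M) ≤ 2 * μ * M := by
      rw [MeasureTheory.integral_mul_const]
      exact mul_le_mul_of_nonneg_right (Jle hμ0 τ hκ.le) hMn
    rw [Real.norm_eq_abs, abs_mul, abs_of_nonneg (inv_nonneg.2 hμ0.le)]
    calc μ⁻¹ * |∫ t in Ioc (0:ℝ) κ, Real.exp (-|τ - t| / μ) * G t|
        ≤ μ⁻¹ * (2 * μ * M) := by
          refine mul_le_mul_of_nonneg_left ?_ (inv_nonneg.2 hμ0.le)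
          exact (hb.trans hb2)
      _ = 2 * M := by field_simp
  · filter_upwards [ae_restrict_mem measurableSet_Ioc] with μ hμ
    exact continuous_const.mul (cont_inner hG hM hμ.1)


end FredholmAux

open FredholmAux

/-- For `κ > 0`, single-scattering albedo `ω ∈ [0, 1]` and continuous data `f` on `[0, κ]`,
there is a unique continuous `Λ : [0, κ] → ℝ` solving the Fredholm integral equation
`Λ(τ) = (ω/2) ∫_0^κ E₁(|τ-t|) Λ(t) dt + f(τ)` for all `τ ∈ [0, κ]`. -/
theorem fredholm_existence_uniqueness
    (κ : ℝ) (hκ : 0 < κ) (ω : ℝ) (hω : ω ∈ Set.Icc (0:ℝ) 1)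
    (f : ℝ → ℝ) (hf : ContinuousOn f (Set.Icc 0 κ)) :
    ∃ Λ : ℝ → ℝ, ContinuousOn Λ (Set.Icc 0 κ) ∧
      (∀ τ ∈ Set.Icc (0:ℝ) κ,
        Λ τ = ω / 2 * (∫ t in (0:ℝ)..κ, expIntegral₁ |τ - t| * Λ t) + f τ) ∧
      ∀ Λ' : ℝ → ℝ, ContinuousOn Λ' (Set.Icc 0 κ) →
        (∀ τ ∈ Set.Icc (0:ℝ) κ,
          Λ' τ = ω / 2 * (∫ t in (0:ℝ)..κ, expIntegral₁ |τ - t| * Λ' t) + f τ) →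
        ∀ τ ∈ Set.Icc (0:ℝ) κ, Λ' τ = Λ τ := by
  obtain ⟨hω0, hω1⟩ := hω
  haveI : Nonempty (Set.Icc (0:ℝ) κ) := Set.Nonempty.to_subtype (Set.nonempty_Icc.2 hκ.le)
  set X := Set.Icc (0:ℝ) κ with hX
  -- the extension of a continuous map on `X` to `ℝ`
  set Gf : C(X, ℝ) → ℝ → ℝ := fun g t => g (Set.projIcc 0 κ hκ.le t) with hGf
  have Gcont : ∀ g : C(X, ℝ), Continuous (Gf g) := fun g =>
    g.continuous.comp continuous_projIcc
  have Gbdd : ∀ g : C(X, ℝ), ∀ t, |Gf g t| ≤ ‖g‖ := fun g t => by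
    simpa [Real.norm_eq_abs] using g.norm_coe_le_norm (Set.projIcc 0 κ hκ.le t)
  -- the integral operator
  have contT : ∀ g : C(X, ℝ), Continuous fun σ : X =>
      ω / 2 * (∫ t in Set.Ioc (0:ℝ) κ, expIntegral₁ |(σ:ℝ) - t| * Gf g t) + f σ := by
    intro g
    exact (continuous_const.mul ((cont_integral hκ (Gcont g) (Gbdd g)).comp
      continuous_subtype_val)).add hf.restrict
  set T : C(X, ℝ) → C(X, ℝ) := fun g =>
    ⟨fun σ => ω / 2 * (∫ t in Set.Ioc (0:ℝ) κ, expIntegral₁ |(σ:ℝ) - t| * Gf g t) + f σ,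
      contT g⟩ with hT
  set q : ℝ := ω * (1 - E₂ κ) with hq
  have hE2pos := E₂pos hκ
  have hE2le := E₂le1 hκ
  have hq0 : 0 ≤ q := mul_nonneg hω0 (by linarith)
  have hq1 : q < 1 := by nlinarith
  -- contraction estimate
  have hlip : ∀ g g' : C(X, ℝ), dist (T g) (T g') ≤ q * dist g g' := by
    intro g g'
    rw [ContinuousMap.dist_le (mul_nonneg hq0 dist_nonneg)]
    intro σ
    have hστ : (σ:ℝ) ∈ Set.Icc 0 κ := σ.2
    have hint : IntegrableOn (fun t => expIntegral₁ |(σ:ℝ) - t| * Gf g t) (Set.Ioc 0 κ) :=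
      int_e1G hκ (Gcont g).measurable (Gbdd g) (σ:ℝ)
    have hint' : IntegrableOn (fun t => expIntegral₁ |(σ:ℝ) - t| * Gf g' t) (Set.Ioc 0 κ) :=
      int_e1G hκ (Gcont g').measurable (Gbdd g') (σ:ℝ)
    have hdiff : T g σ - T g' σ = ω / 2 *
        ∫ t in Set.Ioc (0:ℝ) κ, expIntegral₁ |(σ:ℝ) - t| * (Gf g t - Gf g' t) := by
      have : (∫ t in Set.Ioc (0:ℝ) κ, expIntegral₁ |(σ:ℝ) - t| * (Gf g t - Gf g' t)) =
          (∫ t in Set.Ioc (0:ℝ) κ, expIntegral₁ |(σ:ℝ) - t| * Gf g t) -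
          ∫ t in Set.Ioc (0:ℝ) κ, expIntegral₁ |(σ:ℝ) - t| * Gf g' t := by
        rw [← integral_sub hint hint']
        congr 1; ext t; ring
      rw [this]
      show (ω / 2 * _ + f σ) - (ω / 2 * _ + f σ) = _
      ring
    have hbound : ‖∫ t in Set.Ioc (0:ℝ) κ, expIntegral₁ |(σ:ℝ) - t| * (Gf g t - Gf g' t)‖
        ≤ (2 - 2 * E₂ κ) * dist g g' := by
      have hDnn : (0:ℝ) ≤ dist g g' := dist_nonneg
      have h1 : ‖∫ t in Set.Ioc (0:ℝ) κ, expIntegral₁ |(σ:ℝ) - t| * (Gf g t - Gf g' t)‖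
          ≤ ∫ t in Set.Ioc (0:ℝ) κ, expIntegral₁ |(σ:ℝ) - t| * dist g g' := by
        refine norm_integral_le_of_norm_le
          (int_e1G hκ measurable_const (fun t => by
            rw [abs_of_nonneg hDnn]) (σ:ℝ)) ?_
        refine Filter.Eventually.of_forall fun t => ?_
        rw [Real.norm_eq_abs, abs_mul, abs_of_nonneg (e1_nonneg _)]
        refine mul_le_mul_of_nonneg_left ?_ (e1_nonneg _)
        have : |Gf g t - Gf g' t| = dist (g (Set.projIcc 0 κ hκ.le t))
            (g' (Set.projIcc 0 κ hκ.le t)) := by rw [Real.dist_eq]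
        rw [this]
        exact ContinuousMap.dist_apply_le_dist _
      refine h1.trans ?_
      rw [MeasureTheory.integral_mul_const]
      exact mul_le_mul_of_nonneg_right (kernel_bound hκ hστ) hDnn
    have : dist (T g σ) (T g' σ) = |T g σ - T g' σ| := Real.dist_eq _ _
    rw [this, hdiff, abs_mul, abs_of_nonneg (by linarith : (0:ℝ) ≤ ω / 2)]
    calc ω / 2 * |∫ t in Set.Ioc (0:ℝ) κ, expIntegral₁ |(σ:ℝ) - t| * (Gf g t - Gf g' t)|
        ≤ ω / 2 * ((2 - 2 * E₂ κ) * dist g g') := by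
          refine mul_le_mul_of_nonneg_left ?_ (by linarith)
          simpa [Real.norm_eq_abs] using hbound
      _ = q * dist g g' := by rw [hq]; ring
  have hK : ContractingWith (Real.toNNReal q) T := by
    constructor
    · rw [← Real.toNNReal_one]
      exact (Real.toNNReal_lt_toNNReal_iff one_pos).2 hq1
    · refine LipschitzWith.of_dist_le_mul fun g g' => ?_
      rw [Real.coe_toNNReal q hq0]
      exact hlip g g'
  set Φ : C(X, ℝ) := ContractingWith.fixedPoint T hK with hΦ
  have hΦfix : T Φ = Φ := hK.fixedPoint_isFixedPt
  refine ⟨fun τ => Φ (Set.projIcc 0 κ hκ.le τ), ?_, ?_, ?_⟩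
  · exact (Φ.continuous.comp continuous_projIcc).continuousOn
  · intro τ hτ
    have h1 : Set.projIcc 0 κ hκ.le τ = ⟨τ, hτ⟩ := Set.projIcc_of_mem hκ.le hτ
    have h2 : T Φ ⟨τ, hτ⟩ = Φ ⟨τ, hτ⟩ := by rw [hΦfix]
    show Φ (Set.projIcc 0 κ hκ.le τ) = ω / 2 *
        (∫ t in (0:ℝ)..κ, expIntegral₁ |τ - t| * Φ (Set.projIcc 0 κ hκ.le t)) + f τ
    rw [h1, intervalIntegral.integral_of_le hκ.le]
    exact h2.symm
  · intro Λ' hΛ'c hΛ'eq τ hτ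
    set Ψ : C(X, ℝ) := ⟨X.restrict Λ', hΛ'c.restrict⟩ with hΨ
    have hΨfix : T Ψ = Ψ := by
      ext σ
      have hσ : (σ:ℝ) ∈ Set.Icc 0 κ := σ.2
      have hcongr : (∫ t in Set.Ioc (0:ℝ) κ, expIntegral₁ |(σ:ℝ) - t| * Gf Ψ t) =
          ∫ t in Set.Ioc (0:ℝ) κ, expIntegral₁ |(σ:ℝ) - t| * Λ' t := by
        refine setIntegral_congr_fun measurableSet_Ioc fun t ht => ?_
        have : Set.projIcc 0 κ hκ.le t = ⟨t, Set.mem_Icc.2 ⟨ht.1.le, ht.2⟩⟩ :=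
          Set.projIcc_of_mem hκ.le _
        simp only [hGf, hΨ, this]
        rfl
      show ω / 2 * _ + f σ = _
      rw [hcongr, ← intervalIntegral.integral_of_le hκ.le]
      exact (hΛ'eq (σ:ℝ) hσ).symm
    have := hK.fixedPoint_unique hΨfix
    have h1 : Set.projIcc 0 κ hκ.le τ = ⟨τ, hτ⟩ := Set.projIcc_of_mem hκ.le hτ
    have h3 : Φ = Ψ := by rw [hΦ, this]
    show Λ' τ = Φ (Set.projIcc 0 κ hκ.le τ)
    rw [h1, h3]
    rfl
end
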